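/- arXiv:1812.08269 — 7 statements merged into one kernel-verified Lean document; each statement's English description precedes it below -/
import Mathlib

section
/- (Galois connection) Let k > 0, let L ⊆ Σ* be a language, and let Z be a k-test vector. Then α_k(L) ⊑ Z if and only if L ⊆ γ_k(Z). -/
open Set
open scoped symmDiff

/-- A candidate `k`-test vector: a 4-tuple of sets of strings
(`I` prefixes, `F` suffixes, `T` segments, `C` short strings). -/
structure KTV (A : Type*) where
  I : Set (List A)
  F : Set (List A)
  T : Set (List A)
  C : Set (List A)

variable {A : Type*}

/-- `Z` is a genuine `k`-test vector. -/
def IsKTV (k : ℕ) (Z : KTV A) : Prop :=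
  Z.I ⊆ {w : List A | w.length = k - 1} ∧
  Z.F ⊆ {w : List A | w.length = k - 1} ∧
  Z.T ⊆ {w : List A | w.length = k} ∧
  Z.C ⊆ {w : List A | w.length < k} ∧
  Z.I ∩ Z.F = Z.C ∩ {w : List A | w.length = k - 1}

/-- The componentwise order `⊑` on `k`-test vectors. -/
def ktvLE (Z Z' : KTV A) : Prop :=
  Z.I ⊆ Z'.I ∧ Z.F ⊆ Z'.F ∧ Z.T ⊆ Z'.T ∧ Z.C ⊆ Z'.C

/-- The union `Z ⊔ Z'` of `k`-test vectors. -/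
def ktvUnion (Z Z' : KTV A) : KTV A :=
  ⟨Z.I ∪ Z'.I, Z.F ∪ Z'.F, Z.T ∪ Z'.T,
   Z.C ∪ Z'.C ∪ (Z.I ∩ Z'.F) ∪ (Z'.I ∩ Z.F)⟩

/-- The intersection `Z ⊓ Z'` of `k`-test vectors. -/
def ktvInter (Z Z' : KTV A) : KTV A :=
  ⟨Z.I ∩ Z'.I, Z.F ∩ Z'.F, Z.T ∩ Z'.T, Z.C ∩ Z'.C⟩

/-- The symmetric difference `Z △ Z'` of `k`-test vectors. -/
def ktvSymmDiff (Z Z' : KTV A) : KTV A :=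
  ⟨Z.I ∆ Z'.I, Z.F ∆ Z'.F, Z.T ∆ Z'.T,
   Z.C ∆ Z'.C ∆ (Z'.I ∩ Z.F) ∆ (Z.I ∩ Z'.F)⟩

/-- The least `k`-test vector `⊥ = ⟨∅,∅,∅,∅⟩`. -/
def ktvBot (A : Type*) : KTV A := ⟨∅, ∅, ∅, ∅⟩

/-- The greatest `k`-test vector `⊤ = ⟨Σ^{k-1}, Σ^{k-1}, Σ^k, Σ^{<k}⟩`. -/
def ktvTop (A : Type*) (k : ℕ) : KTV A :=
  ⟨{w | w.length = k - 1}, {w | w.length = k - 1},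
   {w | w.length = k}, {w | w.length < k}⟩

/-- `I_k(L)`: length-`(k-1)` prefixes of words of `L`. -/
def Ik (k : ℕ) (L : Set (List A)) : Set (List A) :=
  {u | u.length = k - 1 ∧ ∃ v, u ++ v ∈ L}

/-- `F_k(L)`: length-`(k-1)` suffixes of words of `L`. -/
def Fk (k : ℕ) (L : Set (List A)) : Set (List A) :=
  {w | w.length = k - 1 ∧ ∃ v, v ++ w ∈ L}

/-- `T_k(L)`: length-`k` substrings of words of `L`. -/
def Tk (k : ℕ) (L : Set (List A)) : Set (List A) :=
  {v | v.length = k ∧ ∃ u w, u ++ v ++ w ∈ L}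

/-- `C_k(L) = (L ∩ Σ^{<k-1}) ∪ (I_k(L) ∩ F_k(L))`. -/
def Ck (k : ℕ) (L : Set (List A)) : Set (List A) :=
  (L ∩ {w | w.length < k - 1}) ∪ (Ik k L ∩ Fk k L)

/-- `α_k(L) = ⟨I_k(L), F_k(L), T_k(L), C_k(L)⟩`. -/
def alphaK (k : ℕ) (L : Set (List A)) : KTV A :=
  ⟨Ik k L, Fk k L, Tk k L, Ck k L⟩

/-- `γ_k(Z) = C ∪ ((IΣ* ∩ Σ*F) \ (Σ*(Σ^k \ T)Σ*))`. -/
def gammaK (k : ℕ) (Z : KTV A) : Set (List A) :=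
  Z.C ∪ (({w | ∃ u ∈ Z.I, u <+: w} ∩ {w | ∃ u ∈ Z.F, u <:+ w}) \
    {w | ∃ v, v.length = k ∧ v ∉ Z.T ∧ v <:+: w})

/-- `L` is `k`-testable in the strict sense. -/
def IsKTSS (k : ℕ) (L : Set (List A)) : Prop :=
  ∃ Z : KTV A, IsKTV k Z ∧ gammaK k Z = L

/-- The cardinality `|Z| = |I| + |F| + |T| + |C ∩ Σ^{<k-1}|` of a `k`-test vector. -/
noncomputable def ktvCard (k : ℕ) (Z : KTV A) : ℕ :=
  Z.I.ncard + Z.F.ncard + Z.T.ncard + (Z.C ∩ {w : List A | w.length < k - 1}).ncard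

/-- Galois connection: `α_k(L) ⊑ Z ↔ L ⊆ γ_k(Z)`. -/
theorem stmt4 {A : Type*} [Fintype A] (k : ℕ) (hk : 0 < k)
    (L : Set (List A)) (Z : KTV A) (hZ : IsKTV k Z) :
    ktvLE (alphaK k L) Z ↔ L ⊆ gammaK k Z := by
  obtain ⟨hI, hF, hT, hC, hIF⟩ := hZ
  constructor
  · rintro ⟨h1, h2, h3, h4⟩ w hw
    by_cases hlen : w.length < k - 1
    · exact Or.inl (h4 (Or.inl ⟨hw, hlen⟩))
    · push_neg at hlen
      refine Or.inr ⟨⟨⟨w.take (k-1),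
          h1 ⟨by simp; omega, w.drop (k-1), by simp [hw]⟩, w.take_prefix _⟩,
        ⟨w.drop (w.length - (k-1)),
          h2 ⟨by simp; omega, w.take (w.length - (k-1)), by simp [hw]⟩,
          w.drop_suffix _⟩⟩, ?_⟩
      rintro ⟨v, hvl, hvT, s, t, hst⟩
      exact hvT (h3 ⟨hvl, s, t, by rw [hst]; exact hw⟩)
  · intro hL
    have hIk : Ik k L ⊆ Z.I := by
      rintro u ⟨hul, v, huv⟩
      rcases hL huv with hc | ⟨⟨⟨u', hu', hpre⟩, _⟩, _⟩
      · have hlen : (u ++ v).length < k := hC hc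
        rw [List.length_append, hul] at hlen
        have hv : v = [] := by
          cases v with
          | nil => rfl
          | cons a t => simp at hlen; omega
        subst hv
        rw [List.append_nil] at hc
        have : u ∈ Z.I ∩ Z.F := by rw [hIF]; exact ⟨hc, hul⟩
        exact this.1
      · have heq : u' = u := by
          have hl : u'.length = u.length := by rw [hI hu', hul]
          have := List.prefix_of_prefix_length_le hpre (u.prefix_append v) (by omega)
          exact this.eq_of_length hl
        rwa [heq] at hu'
    have hFk : Fk k L ⊆ Z.F := by
      rintro u ⟨hul, v, huv⟩
      rcases hL huv with hc | ⟨⟨_, ⟨u', hu', hsuf⟩⟩, _⟩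
      · have hlen : (v ++ u).length < k := hC hc
        rw [List.length_append, hul] at hlen
        have hv : v = [] := by
          cases v with
          | nil => rfl
          | cons a t => simp at hlen; omega
        subst hv
        rw [List.nil_append] at hc
        have : u ∈ Z.I ∩ Z.F := by rw [hIF]; exact ⟨hc, hul⟩
        exact this.2
      · have heq : u' = u := by
          have hl : u'.length = u.length := by rw [hF hu', hul]
          have := List.suffix_of_suffix_length_le hsuf (v.suffix_append u) (by omega)
          exact this.eq_of_length hl
        rwa [heq] at hu'
    refine ⟨hIk, hFk, ?_, ?_⟩
    · rintro v ⟨hvl, s, t, hst⟩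
      rcases hL hst with hc | ⟨_, hno⟩
      · exfalso
        have := hC hc
        simp only [Set.mem_setOf_eq, List.length_append] at this
        omega
      · by_contra hvT
        exact hno ⟨v, hvl, hvT, s, t, rfl⟩
    · rintro x (⟨hxL, hxl⟩ | ⟨hxI, hxF⟩)
      · rcases hL hxL with hc | ⟨⟨⟨u', hu', hpre⟩, _⟩, _⟩
        · exact hc
        · exfalso
          have h1 := hI hu'
          have h2 := hpre.length_le
          simp only [Set.mem_setOf_eq] at h1 hxl
          omega
      · have : x ∈ Z.C ∩ {w : List A | w.length = k - 1} := by
          rw [← hIF]; exact ⟨hIk hxI, hFk hxF⟩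
        exact this.1
end

section
/- For all k > 0 and every k-test vector Z, α_k(γ_k(Z)) ⊑ Z; that is, the associated kernel operator α_k ∘ γ_k is deflationary. -/
open Set
open scoped symmDiff

variable {A : Type*}

/-- the kernel operator `α_k ∘ γ_k` is deflationary. -/
theorem stmt6 {A : Type*} [Fintype A] (k : ℕ) (hk : 0 < k)
    (Z : KTV A) (hZ : IsKTV k Z) :
    ktvLE (alphaK k (gammaK k Z)) Z := by
  obtain ⟨hI, hF, hT, hC, hIF⟩ := hZ
  refine ⟨?_, ?_, ?_, ?_⟩
  · rintro u ⟨hlen, v, hv⟩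
    rcases hv with hmem | ⟨⟨⟨u', hu', hpre⟩, _⟩, _⟩
    · -- u ++ v ∈ C, length < k, |u| = k-1, so v = [], u ∈ C ∩ Σ^{k-1} = I ∩ F
      have hlt := hC hmem
      simp only [Set.mem_setOf_eq, List.length_append, hlen] at hlt
      have hv0 : v = [] := by
        have : v.length = 0 := by omega
        exact List.length_eq_zero_iff.mp this
      rw [hv0, List.append_nil] at hmem
      have : u ∈ Z.I ∩ Z.F := by rw [hIF]; exact ⟨hmem, hlen⟩
      exact this.1
    · have hlen' : u'.length = u.length := by
        have := hI hu'; simp only [Set.mem_setOf_eq] at this; rw [this, hlen]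
      have : u' = u := by
        have h2 : u <+: u ++ v := List.prefix_append u v
        rcases List.prefix_or_prefix_of_prefix hpre h2 with h | h
        · exact h.eq_of_length hlen'
        · exact (h.eq_of_length hlen'.symm).symm
      exact this ▸ hu'
  · rintro w ⟨hlen, v, hv⟩
    rcases hv with hmem | ⟨⟨_, ⟨w', hw', hsuf⟩⟩, _⟩
    · have hlt := hC hmem
      simp only [Set.mem_setOf_eq, List.length_append, hlen] at hlt
      have hv0 : v = [] := by
        have : v.length = 0 := by omega
        exact List.length_eq_zero_iff.mp this
      rw [hv0, List.nil_append] at hmem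
      have : w ∈ Z.I ∩ Z.F := by rw [hIF]; exact ⟨hmem, hlen⟩
      exact this.2
    · have hlen' : w'.length = w.length := by
        have := hF hw'; simp only [Set.mem_setOf_eq] at this; rw [this, hlen]
      have : w' = w := by
        have h2 : w <:+ v ++ w := List.suffix_append v w
        rcases List.suffix_or_suffix_of_suffix hsuf h2 with h | h
        · exact h.eq_of_length hlen'
        · exact (h.eq_of_length hlen'.symm).symm
      exact this ▸ hw'
  · rintro v ⟨hlen, u, w, hv⟩
    rcases hv with hmem | ⟨_, hnot⟩
    · have hlt := hC hmem
      simp only [Set.mem_setOf_eq, List.length_append, hlen] at hlt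
      omega
    · by_contra hvT
      exact hnot ⟨v, hlen, hvT, ⟨u, w, by simp⟩⟩
  · rintro w (⟨hmem, hshort⟩ | ⟨⟨hlenI, vI, hvI⟩, ⟨hlenF, vF, hvF⟩⟩)
    · simp only [Set.mem_setOf_eq] at hshort
      rcases hmem with h | ⟨⟨⟨u', hu', hpre⟩, _⟩, _⟩
      · exact h
      · have := hI hu'
        simp only [Set.mem_setOf_eq] at this
        have := hpre.length_le
        omega
    · -- w ∈ Ik ∩ Fk of gammaK, so w ∈ I and w ∈ F (by first two parts), then C
      have hwI : w ∈ Z.I := by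
        rcases hvI with hmem | ⟨⟨⟨u', hu', hpre⟩, _⟩, _⟩
        · have hlt := hC hmem
          simp only [Set.mem_setOf_eq, List.length_append, hlenI] at hlt
          have hv0 : vI = [] := List.length_eq_zero_iff.mp (by omega)
          rw [hv0, List.append_nil] at hmem
          have : w ∈ Z.I ∩ Z.F := by rw [hIF]; exact ⟨hmem, hlenI⟩
          exact this.1
        · have hlen' : u'.length = w.length := by
            have := hI hu'; simp only [Set.mem_setOf_eq] at this; rw [this, hlenI]
          have : u' = w := by
            have h2 : w <+: w ++ vI := List.prefix_append w vI
            rcases List.prefix_or_prefix_of_prefix hpre h2 with h | h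
            · exact h.eq_of_length hlen'
            · exact (h.eq_of_length hlen'.symm).symm
          exact this ▸ hu'
      have hwF : w ∈ Z.F := by
        rcases hvF with hmem | ⟨⟨_, ⟨w', hw', hsuf⟩⟩, _⟩
        · have hlt := hC hmem
          simp only [Set.mem_setOf_eq, List.length_append, hlenF] at hlt
          have hv0 : vF = [] := List.length_eq_zero_iff.mp (by omega)
          rw [hv0, List.nil_append] at hmem
          have : w ∈ Z.I ∩ Z.F := by rw [hIF]; exact ⟨hmem, hlenF⟩
          exact this.2
        · have hlen' : w'.length = w.length := by
            have := hF hw'; simp only [Set.mem_setOf_eq] at this; rw [this, hlenF]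
          have : w' = w := by
            have h2 : w <:+ vF ++ w := List.suffix_append vF w
            rcases List.suffix_or_suffix_of_suffix hsuf h2 with h | h
            · exact h.eq_of_length hlen'
            · exact (h.eq_of_length hlen'.symm).symm
          exact this ▸ hw'
      have : w ∈ Z.C ∩ {w : List A | w.length = k - 1} := by
        rw [← hIF]; exact ⟨hwI, hwF⟩
      exact this.1
end

section
/- For all k > 0, every language L ⊆ Σ*, and every k-test vector Z, if L ⊆ γ_k(Z) then γ_k(α_k(L)) ⊆ γ_k(Z); consequently γ_k(α_k(L)) is the smallest k-TSS language containing L. -/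
open Set
open scoped symmDiff

variable {A : Type*}

lemma mem_gammaK {k : ℕ} {Z : KTV A} {w : List A} :
    w ∈ gammaK k Z ↔ w ∈ Z.C ∨
      ((∃ u ∈ Z.I, u <+: w) ∧ (∃ u ∈ Z.F, u <:+ w) ∧
        ¬ ∃ v : List A, v.length = k ∧ v ∉ Z.T ∧ v <:+: w) := by
  simp [gammaK, Set.mem_union, Set.mem_diff, Set.mem_inter_iff, and_assoc]

lemma gammaK_mono {k : ℕ} {Z Z' : KTV A} (h : ktvLE Z Z') :
    gammaK k Z ⊆ gammaK k Z' := by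
  obtain ⟨hI, hF, hT, hC⟩ := h
  intro w hw
  rw [mem_gammaK] at hw ⊢
  rcases hw with hw | ⟨⟨u, hu, hup⟩, ⟨f, hf, hfs⟩, hbad⟩
  · exact Or.inl (hC hw)
  · refine Or.inr ⟨⟨u, hI hu, hup⟩, ⟨f, hF hf, hfs⟩, ?_⟩
    rintro ⟨v, hv, hvT, hvi⟩
    exact hbad ⟨v, hv, fun h => hvT (hT h), hvi⟩

lemma alphaK_le {k : ℕ} (hk : 0 < k) {Z : KTV A} (hZ : IsKTV k Z)
    {L : Set (List A)} (hL : L ⊆ gammaK k Z) : ktvLE (alphaK k L) Z := by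
  obtain ⟨hZI, hZF, hZT, hZC, hZeq⟩ := hZ
  have hIk : Ik k L ⊆ Z.I := by
    rintro u ⟨hu, v, hv⟩
    rcases mem_gammaK.1 (hL hv) with h | ⟨⟨p, hpI, hpp⟩, -, -⟩
    · have hlen := hZC h
      simp only [Set.mem_setOf_eq, List.length_append] at hlen
      have : v = [] := by
        have : v.length = 0 := by omega
        exact List.eq_nil_of_length_eq_zero this
      subst this
      have : u ∈ Z.I ∩ Z.F := by
        rw [hZeq]
        exact ⟨by simpa using h, hu⟩
      exact this.1
    · obtain ⟨t, ht⟩ := hpp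
      have hplen : p.length = k - 1 := hZI hpI
      have : p = u := (List.append_inj ht (by omega)).1
      rwa [this] at hpI
  have hFk : Fk k L ⊆ Z.F := by
    rintro u ⟨hu, v, hv⟩
    rcases mem_gammaK.1 (hL hv) with h | ⟨-, ⟨p, hpF, hps⟩, -⟩
    · have hlen := hZC h
      simp only [Set.mem_setOf_eq, List.length_append] at hlen
      have : v = [] := by
        have : v.length = 0 := by omega
        exact List.eq_nil_of_length_eq_zero this
      subst this
      have : u ∈ Z.I ∩ Z.F := by
        rw [hZeq]
        exact ⟨by simpa using h, hu⟩
      exact this.2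
    · obtain ⟨t, ht⟩ := hps
      have hplen : p.length = k - 1 := hZF hpF
      have : p = u := (List.append_inj' ht (by omega)).2
      rwa [this] at hpF
  have hTk : Tk k L ⊆ Z.T := by
    rintro v ⟨hv, a, b, hab⟩
    rcases mem_gammaK.1 (hL hab) with h | ⟨-, -, hbad⟩
    · have hlen := hZC h
      simp only [Set.mem_setOf_eq, List.length_append] at hlen
      omega
    · by_contra hvT
      exact hbad ⟨v, hv, hvT, a, b, rfl⟩
  refine ⟨hIk, hFk, hTk, ?_⟩
  rintro w (⟨hwL, hwlen⟩ | ⟨hwI, hwF⟩)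
  · rcases mem_gammaK.1 (hL hwL) with h | ⟨⟨p, hpI, hpp⟩, -, -⟩
    · exact h
    · have := hpp.length_le
      have := hZI hpI
      simp only [Set.mem_setOf_eq] at *
      omega
  · have : w ∈ Z.C ∩ {w : List A | w.length = k - 1} := by
      rw [← hZeq]; exact ⟨hIk hwI, hFk hwF⟩
    exact this.1

lemma subset_gammaK_alphaK {k : ℕ} (hk : 0 < k) (L : Set (List A)) :
    L ⊆ gammaK k (alphaK k L) := by
  intro w hw
  rw [mem_gammaK]
  rcases lt_or_ge w.length (k - 1) with hlen | hlen
  · exact Or.inl (Or.inl ⟨hw, hlen⟩)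
  · refine Or.inr ⟨⟨w.take (k - 1), ⟨by simp [min_eq_left hlen], w.drop (k - 1),
      by simp [hw]⟩, List.take_prefix _ _⟩,
      ⟨w.drop (w.length - (k - 1)), ⟨by simp; omega, w.take (w.length - (k - 1)),
      by simp [hw]⟩, List.drop_suffix _ _⟩, ?_⟩
    rintro ⟨v, hv, hvT, a, b, hab⟩
    exact hvT ⟨hv, a, b, hab ▸ hw⟩

lemma isKTV_alphaK {k : ℕ} (hk : 0 < k) (L : Set (List A)) :
    IsKTV k (alphaK k L) := by
  refine ⟨fun u hu => hu.1, fun u hu => hu.1, fun u hu => hu.1, ?_, ?_⟩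
  · rintro w (⟨-, hwlen⟩ | ⟨hwI, -⟩)
    · exact lt_of_lt_of_le hwlen (Nat.sub_le k 1)
    · have := hwI.1
      simp only [Set.mem_setOf_eq] at *
      omega
  · ext w
    constructor
    · rintro ⟨hI, hF⟩
      exact ⟨Or.inr ⟨hI, hF⟩, hI.1⟩
    · rintro ⟨(⟨-, h1⟩ | h), h2⟩
      · simp only [Set.mem_setOf_eq] at h1 h2; omega
      · exact h

/-- `γ_k(α_k(L))` is the smallest `k`-TSS language containing `L`. -/
theorem stmt8 {A : Type*} [Fintype A] (k : ℕ) (hk : 0 < k)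
    (L : Set (List A)) :
    (∀ Z : KTV A, IsKTV k Z → L ⊆ gammaK k Z → gammaK k (alphaK k L) ⊆ gammaK k Z) ∧
    IsKTSS k (gammaK k (alphaK k L)) ∧ L ⊆ gammaK k (alphaK k L) := by
  refine ⟨fun Z hZ hL => gammaK_mono (alphaK_le hk hZ hL),
    ⟨alphaK k L, isKTV_alphaK hk L, rfl⟩, subset_gammaK_alphaK hk L⟩
end

section
/- For all k > 0 and every k-test vector Z, γ_k(α_k(γ_k(Z))) = γ_k(Z); moreover, for any k-test vector Z', if γ_k(Z) = γ_k(Z') then α_k(γ_k(Z)) ⊑ Z'. That is, α_k(γ_k(Z)) is the smallest k-test vector denoting the same language as Z. -/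
open Set
open scoped symmDiff

variable {A : Type*}

/-- Minimality: `α_k(γ_k(Z)) ⊑ Z` for any genuine `k`-test vector `Z`. -/
lemma alpha_gamma_le {k : ℕ} (hk : 0 < k) (Z : KTV A) (hZ : IsKTV k Z) :
    ktvLE (alphaK k (gammaK k Z)) Z := by
  obtain ⟨hI, hF, hT, hC, hIF⟩ := hZ
  have memI : ∀ u v : List A, u.length = k - 1 → u ++ v ∈ gammaK k Z → u ∈ Z.I := by
    intro u v hu hv
    rcases hv with hc | ⟨⟨⟨p, hpI, hp⟩, -⟩, -⟩
    · have hlen : (u ++ v).length < k := hC hc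
      rw [List.length_append] at hlen
      have hv0 : v = [] := by
        have : v.length = 0 := by omega
        exact List.eq_nil_of_length_eq_zero this
      subst hv0
      rw [List.append_nil] at hc
      have : u ∈ Z.I ∩ Z.F := by rw [hIF]; exact ⟨hc, hu⟩
      exact this.1
    · have hpl : p.length = k - 1 := hI hpI
      have hpu : p <+: u := List.prefix_of_prefix_length_le hp (u.prefix_append v) (by omega)
      have : p = u := hpu.eq_of_length (by omega)
      exact this ▸ hpI
  have memF : ∀ w v : List A, w.length = k - 1 → v ++ w ∈ gammaK k Z → w ∈ Z.F := by
    intro w v hw hv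
    rcases hv with hc | ⟨⟨-, ⟨s, hsF, hs⟩⟩, -⟩
    · have hlen : (v ++ w).length < k := hC hc
      rw [List.length_append] at hlen
      have hv0 : v = [] := by
        have : v.length = 0 := by omega
        exact List.eq_nil_of_length_eq_zero this
      subst hv0
      rw [List.nil_append] at hc
      have : w ∈ Z.I ∩ Z.F := by rw [hIF]; exact ⟨hc, hw⟩
      exact this.2
    · have hsl : s.length = k - 1 := hF hsF
      have hsw : s <:+ w := List.suffix_of_suffix_length_le hs ((List.suffix_append v w)) (by omega)
      have : s = w := hsw.eq_of_length (by omega)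
      exact this ▸ hsF
  refine ⟨?_, ?_, ?_, ?_⟩
  · rintro u ⟨hu, v, hv⟩
    exact memI u v hu hv
  · rintro w ⟨hw, v, hv⟩
    exact memF w v hw hv
  · rintro v ⟨hv, u, w, huw⟩
    rcases huw with hc | ⟨-, ht⟩
    · have hlen : (u ++ v ++ w).length < k := hC hc
      simp only [List.length_append] at hlen
      omega
    · by_contra hvT
      exact ht ⟨v, hv, hvT, ⟨u, w, by simp⟩⟩
  · rintro w (⟨hwL, hwl⟩ | ⟨⟨hw, v, hv⟩, ⟨-, v', hv'⟩⟩)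
    · rcases hwL with hc | ⟨⟨⟨p, hpI, hp⟩, -⟩, -⟩
      · exact hc
      · have := hp.length_le
        have := hI hpI
        simp only [Set.mem_setOf_eq, Set.mem_setOf_eq] at *
        omega
    · have hwI : w ∈ Z.I := memI w v hw hv
      have hwF : w ∈ Z.F := memF w v' hw hv'
      have : w ∈ Z.C ∩ {w : List A | w.length = k - 1} := by
        rw [← hIF]; exact ⟨hwI, hwF⟩
      exact this.1

/-- `L ⊆ γ_k(α_k(L))` for any language `L`. -/
lemma subset_gamma_alpha {k : ℕ} (L : Set (List A)) :
    L ⊆ gammaK k (alphaK k L) := by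
  intro w hw
  by_cases h : w.length < k - 1
  · exact Or.inl (Or.inl ⟨hw, h⟩)
  · push_neg at h
    right
    refine ⟨⟨⟨w.take (k - 1), ⟨?_, w.drop (k - 1), by simpa using hw⟩, w.take_prefix _⟩,
      ⟨w.drop (w.length - (k - 1)),
        ⟨?_, w.take (w.length - (k - 1)), by simpa using hw⟩, w.drop_suffix _⟩⟩, ?_⟩
    · simp; omega
    · simp; omega
    · rintro ⟨v, hvl, hvT, s, t, hst⟩
      exact hvT ⟨hvl, s, t, by rw [hst]; exact hw⟩

/-- `α_k(γ_k(Z))` is the smallest `k`-test vector denoting the same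
language as `Z`. -/
theorem stmt9 {A : Type*} [Fintype A] (k : ℕ) (hk : 0 < k)
    (Z : KTV A) (hZ : IsKTV k Z) :
    gammaK k (alphaK k (gammaK k Z)) = gammaK k Z ∧
    ∀ Z' : KTV A, IsKTV k Z' → gammaK k Z = gammaK k Z' →
      ktvLE (alphaK k (gammaK k Z)) Z' := by
  have hle := alpha_gamma_le hk Z hZ
  obtain ⟨hleI, hleF, hleT, hleC⟩ := hle
  constructor
  · apply Set.Subset.antisymm _ (subset_gamma_alpha _)
    intro w hw
    rcases hw with hc | ⟨⟨⟨p, hpI, hp⟩, ⟨s, hsF, hs⟩⟩, ht⟩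
    · rcases hc with ⟨hwL, -⟩ | ⟨hI', hF'⟩
      · exact hwL
      · left
        have hw : w ∈ Z.I ∩ Z.F := ⟨hleI hI', hleF hF'⟩
        rw [hZ.2.2.2.2] at hw
        exact hw.1
    · right
      refine ⟨⟨⟨p, hleI hpI, hp⟩, ⟨s, hleF hsF, hs⟩⟩, ?_⟩
      rintro ⟨v, hvl, hvT, hvi⟩
      exact ht ⟨v, hvl, fun h => hvT (hleT h), hvi⟩
  · intro Z' hZ' heq
    rw [heq]
    exact alpha_gamma_le hk Z' hZ'
end

section
/- The class of k-testable languages in the strict sense is not closed under union: over the alphabet Σ = {a, b}, the language {a^n : n ≥ 2} ∪ {b a^n b : n ≥ 0} (the union of the 3-TSS languages γ_3(⟨{aa},{aa},{aaa},{aa}⟩) and γ_3(⟨{ba,bb},{ab,bb},{baa,bab,aaa,aab},{bb}⟩)) is not a k-testable language for any value of k > 0. -/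
open Set
open scoped symmDiff

variable {A : Type*}

private lemma tdInfix (w : List Bool) (j m : ℕ) : (w.drop j).take m <:+: w :=
  (List.take_prefix m (w.drop j)).isInfix.trans (List.drop_suffix j w).isInfix

private lemma tdLen (w : List Bool) (j m : ℕ) (h : j + m ≤ w.length) :
    ((w.drop j).take m).length = m := by
  simp [List.length_take, List.length_drop]; omega

/-- elements of `true :: (replicate n false ++ [true])` -/
private lemma wget (n i : ℕ) (h : i < n + 2) :
    (true :: (List.replicate n false ++ [true]))[i]'(by simp; omega) =
      if i = 0 ∨ i = n + 1 then true else false := by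
  rcases i with _ | m
  · simp
  · rw [List.getElem_cons_succ]
    by_cases hm : m < n
    · rw [List.getElem_append_left (by simpa)]
      simp [hm]
      omega
    · have hmn : m = n := by omega
      subst hmn
      rw [List.getElem_append_right (by simp)]
      simp

/-- forward direction for γ₃Z -/
private lemma gammaZ_fwd (w : List Bool)
    (hI : [false,false] <+: w) (hF : [false,false] <:+ w)
    (hT : ∀ v : List Bool, v.length = 3 → v <:+: w → v = [false,false,false]) :
    ∃ n, 2 ≤ n ∧ w = List.replicate n false := by
  have hlen : 2 ≤ w.length := by
    have := hI.length_le; simpa using this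
  refine ⟨w.length, hlen, ?_⟩
  have key : ∀ i (hi : i < w.length), w[i] = false := by
    intro i hi
    by_cases h3 : w.length ≤ 2
    · have hw : w = [false, false] :=
        (List.IsPrefix.eq_of_length_le hI (by simpa using h3)).symm
      subst hw
      simp only [List.length_cons, List.length_nil] at hi
      rcases i with _ | _ | i
      · simp
      · simp
      · omega
    · push_neg at h3
      set j := min i (w.length - 3) with hj
      have hj3 : j + 3 ≤ w.length := by omega
      have hv : (w.drop j).take 3 = List.replicate 3 false := by
        rw [hT _ (tdLen w j 3 hj3) (tdInfix w j 3)]; rfl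
      have hij : i - j < 3 := by omega
      have hgi : i = j + (i - j) := by omega
      have hlt : i - j < ((w.drop j).take 3).length := by
        rw [tdLen w j 3 hj3]; omega
      have e1 : w[i] = ((w.drop j).take 3)[i - j]'hlt := by
        rw [List.getElem_take, List.getElem_drop]
        congr 1
      rw [e1, List.getElem_of_eq hv hlt]
      exact List.eq_of_mem_replicate (List.getElem_mem _)
  exact List.eq_replicate_iff.mpr ⟨rfl, fun x hx => by
    obtain ⟨i, hi, rfl⟩ := List.mem_iff_getElem.mp hx
    exact key i hi⟩

/-- infixes of replicate are replicates -/
private lemma infix_replicate (v : List Bool) (n : ℕ) (a : Bool)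
    (h : v <:+: List.replicate n a) : v = List.replicate v.length a :=
  List.eq_replicate_iff.mpr ⟨rfl, fun x hx => List.eq_of_mem_replicate (h.subset hx)⟩

/-- replicate m is a prefix of replicate n for m ≤ n -/
private lemma rep_prefix (m n : ℕ) (a : Bool) (h : m ≤ n) :
    List.replicate m a <+: List.replicate n a :=
  ⟨List.replicate (n - m) a, by rw [← List.replicate_add]; congr 1; omega⟩

private lemma rep_suffix (m n : ℕ) (a : Bool) (h : m ≤ n) :
    List.replicate m a <:+ List.replicate n a :=
  ⟨List.replicate (n - m) a, by rw [← List.replicate_add]; congr 1; omega⟩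

/-- forward direction for γ₃Z' -/
private lemma gammaZ'_fwd (w : List Bool)
    (hI : [true,false] <+: w ∨ [true,true] <+: w)
    (hF : [false,true] <:+ w ∨ [true,true] <:+ w)
    (hT : ∀ v : List Bool, v.length = 3 → v <:+: w →
      v = [true,false,false] ∨ v = [true,false,true] ∨
      v = [false,false,false] ∨ v = [false,false,true]) :
    ∃ n, w = true :: (List.replicate n false ++ [true]) := by
  have hlen : 2 ≤ w.length := by
    rcases hI with h | h <;> simpa using h.length_le
  refine ⟨w.length - 2, ?_⟩
  have h0 : ∀ (h : 0 < w.length), w[0] = true := by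
    intro h
    rcases hI with ⟨t, ht⟩ | ⟨t, ht⟩ <;>
      rw [List.getElem_of_eq ht.symm] <;> simp
  have hlast : ∀ i (hi : i < w.length), i = w.length - 1 → w[i] = true := by
    intro i hi hieq
    rcases hF with ⟨s, hs⟩ | ⟨s, hs⟩ <;>
    · have hsl : w.length = s.length + 2 := by rw [← hs]; simp
      rw [List.getElem_of_eq hs.symm]
      rw [List.getElem_append_right (by omega)]
      have h1 : i - s.length = 1 := by omega
      simp [h1]
  have hmid : ∀ i (hi : i < w.length), 0 < i → i < w.length - 1 → w[i] = false := by
    intro i hi h1 h2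
    have hj3 : (i - 1) + 3 ≤ w.length := by omega
    have hv := hT _ (tdLen w (i-1) 3 hj3) (tdInfix w (i-1) 3)
    have hlt : 1 < ((w.drop (i-1)).take 3).length := by
      rw [tdLen w (i-1) 3 hj3]; omega
    have e1 : w[i] = ((w.drop (i-1)).take 3)[1]'hlt := by
      rw [List.getElem_take, List.getElem_drop]
      congr 1
      omega
    rcases hv with hv | hv | hv | hv <;>
      rw [e1, List.getElem_of_eq hv hlt] <;> rfl
  refine List.ext_getElem (by simp; omega) ?_
  intro i hi hi'
  rcases i with _ | m
  · simpa using h0 (by omega)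
  · rw [List.getElem_cons_succ]
    by_cases hm : m < w.length - 2
    · rw [List.getElem_append_left (by simpa)]
      rw [List.getElem_replicate]
      exact hmid (m+1) hi (by omega) (by omega)
    · have hmn : m = w.length - 2 := by
        simp at hi'; omega
      rw [List.getElem_append_right (by simp; omega)]
      rw [hlast (m+1) hi (by omega)]
      simp

/-- backward direction for γ₃Z': infix classification -/
private lemma gammaZ'_bwd_T (n : ℕ) (v : List Bool) (hv : v.length = 3)
    (h : v <:+: (true :: (List.replicate n false ++ [true]))) :
      v = [true,false,false] ∨ v = [true,false,true] ∨
      v = [false,false,false] ∨ v = [false,false,true] := by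
  set w : List Bool := true :: (List.replicate n false ++ [true]) with hw
  have hwl : w.length = n + 2 := by simp [hw]
  obtain ⟨s, t, hst⟩ := h
  have hlen : s.length + 3 + t.length = n + 2 := by
    have := congrArg List.length hst
    simp [hwl, hv] at this
    omega
  rcases v with _ | ⟨v0, _ | ⟨v1, _ | ⟨v2, _ | v'⟩⟩⟩ <;> simp at hv
  set j := s.length with hj
  have hgv : ∀ m (hm : m < 3), ([v0,v1,v2] : List Bool)[m]'(by simpa) =
      w[j + m]'(by omega) := by
    intro m hm
    rw [List.getElem_of_eq hst.symm (by omega)]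
    rw [List.getElem_append_left (by simp; omega)]
    rw [List.getElem_append_right (by omega)]
    congr 1
    omega
  have e0 : v0 = (if j = 0 then true else false) := by
    have h' := hgv 0 (by omega)
    simp only [List.getElem_cons_zero, Nat.add_zero] at h'
    rw [h', List.getElem_of_eq hw, wget n j (by omega)]
    by_cases hj0 : j = 0
    · simp [hj0]
    · rw [if_neg (by omega), if_neg hj0]
  have e1 : v1 = false := by
    have h' := hgv 1 (by omega)
    simp only [List.getElem_cons_succ, List.getElem_cons_zero] at h'
    rw [h', List.getElem_of_eq hw, wget n (j+1) (by omega)]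
    rw [if_neg (by omega)]
  have e2 : v2 = (if j + 2 = n + 1 then true else false) := by
    have h' := hgv 2 (by omega)
    simp only [List.getElem_cons_succ, List.getElem_cons_zero] at h'
    rw [h', List.getElem_of_eq hw, wget n (j+2) (by omega)]
    by_cases hj2 : j + 2 = n + 1
    · simp [hj2]
    · rw [if_neg (by omega), if_neg hj2]
  subst e0; subst e1; subst e2
  by_cases hj0 : j = 0 <;> by_cases hj2 : j + 2 = n + 1 <;> simp [hj0, hj2] <;> tauto

private lemma lem1 : IsKTV 3 (⟨{[false,false]}, {[false,false]}, {[false,false,false]},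
    {[false,false]}⟩ : KTV Bool) := by
  refine ⟨?_, ?_, ?_, ?_, ?_⟩
  · rintro w rfl; simp
  · rintro w rfl; simp
  · rintro w rfl; simp
  · rintro w rfl; simp
  · ext w; simp

private lemma lem2 : IsKTV 3 (⟨{[true,false],[true,true]}, {[false,true],[true,true]},
    {[true,false,false],[true,false,true],[false,false,false],[false,false,true]},
    {[true,true]}⟩ : KTV Bool) := by
  refine ⟨?_, ?_, ?_, ?_, ?_⟩
  · rintro w (rfl | rfl) <;> simp
  · rintro w (rfl | rfl) <;> simp
  · rintro w (rfl | rfl | rfl | rfl) <;> simp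
  · rintro w rfl; simp
  · ext w
    simp only [Set.mem_inter_iff, Set.mem_insert_iff, Set.mem_singleton_iff, Set.mem_setOf_eq]
    constructor
    · rintro ⟨rfl | rfl, h2 | h2⟩ <;> simp_all
    · rintro ⟨rfl, -⟩; simp

private lemma lem3 :
    gammaK 3 (⟨{[false,false]}, {[false,false]}, {[false,false,false]},
      {[false,false]}⟩ : KTV Bool) ∪
    gammaK 3 (⟨{[true,false],[true,true]}, {[false,true],[true,true]},
      {[true,false,false],[true,false,true],[false,false,false],[false,false,true]},
      {[true,true]}⟩ : KTV Bool) =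
    ({x | ∃ n, 2 ≤ n ∧ x = List.replicate n false} ∪
     {x | ∃ n, x = true :: (List.replicate n false ++ [true])}) := by
  ext x
  simp only [Set.mem_union]
  constructor
  · rintro (hx | hx)
    · rcases hx with hC | ⟨⟨⟨u, hu, hup⟩, ⟨u', hu', hus⟩⟩, hT⟩
      · left
        refine ⟨2, le_refl 2, ?_⟩
        simpa using hC
      · left
        simp only [Set.mem_singleton_iff] at hu hu'
        subst hu; subst hu'
        refine gammaZ_fwd x hup hus ?_
        intro v h1 h2
        by_contra hne
        exact hT ⟨v, h1, by simpa using hne, h2⟩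
    · rcases hx with hC | ⟨⟨⟨u, hu, hup⟩, ⟨u', hu', hus⟩⟩, hT⟩
      · right
        refine ⟨0, ?_⟩
        simpa using hC
      · right
        simp only [Set.mem_insert_iff, Set.mem_singleton_iff] at hu hu'
        refine gammaZ'_fwd x ?_ ?_ ?_
        · rcases hu with rfl | rfl
          · exact Or.inl hup
          · exact Or.inr hup
        · rcases hu' with rfl | rfl
          · exact Or.inl hus
          · exact Or.inr hus
        · intro v h1 h2
          by_contra hne
          refine hT ⟨v, h1, ?_, h2⟩
          simpa using hne
  · rintro (⟨n, hn, rfl⟩ | ⟨n, rfl⟩)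
    · left; right
      refine ⟨⟨⟨[false,false], rfl, ?_⟩, ⟨[false,false], rfl, ?_⟩⟩, ?_⟩
      · simpa using rep_prefix 2 n false hn
      · simpa using rep_suffix 2 n false hn
      · rintro ⟨v, h3, hvT, hinf⟩
        have := infix_replicate v n false hinf
        rw [h3] at this
        exact hvT (by simpa using this)
    · right
      rcases n with _ | n0
      · left; simp [gammaK]
      · right
        refine ⟨⟨⟨[true,false], by simp, ?_⟩, ⟨[false,true], by simp, ?_⟩⟩, ?_⟩
        · exact ⟨List.replicate n0 false ++ [true], by simp [List.replicate_succ]⟩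
        · refine ⟨true :: List.replicate n0 false, ?_⟩
          simp [List.replicate_succ' (n := n0)]
        · rintro ⟨v, h3, hvT, hinf⟩
          exact hvT (by simpa using gammaZ'_bwd_T (n0+1) v h3 hinf)

private lemma lem4 : ∀ k, 0 < k →
    ¬ IsKTSS k ({x | ∃ n, 2 ≤ n ∧ x = List.replicate n false} ∪
      {x | ∃ n, x = true :: (List.replicate n false ++ [true])} : Set (List Bool)) := by
  intro k hk
  rintro ⟨Z, ⟨hI, hF, hT, hC, -⟩, hγ⟩
  have hxL : (true :: (List.replicate (2*k) false ++ [true])) ∈ gammaK k Z := by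
    rw [hγ]; exact Or.inr ⟨2*k, rfl⟩
  have hyL : (List.replicate (2*k) false) ∈ gammaK k Z := by
    rw [hγ]; exact Or.inl ⟨2*k, by omega, rfl⟩
  simp only [gammaK, Set.mem_union, Set.mem_inter_iff, Set.mem_diff,
    Set.mem_setOf_eq] at hxL hyL
  rcases hxL with hxC | ⟨⟨⟨uI, huI, huIp⟩, -⟩, hxT'⟩
  · have := hC hxC
    simp only [Set.mem_setOf_eq, List.length_cons, List.length_append,
      List.length_replicate] at this
    omega
  rcases hyL with hyC | ⟨⟨-, ⟨uF, huF, huFs⟩⟩, hyT'⟩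
  · have := hC hyC
    simp only [Set.mem_setOf_eq, List.length_replicate] at this
    omega
  have hTx : ∀ v : List Bool, v.length = k →
      v <:+: (true :: (List.replicate (2*k) false ++ [true])) → v ∈ Z.T := by
    intro v h1 h2
    by_contra hv
    exact hxT' ⟨v, h1, hv, h2⟩
  have hTy : ∀ v : List Bool, v.length = k →
      v <:+: List.replicate (2*k) false → v ∈ Z.T := by
    intro v h1 h2
    by_contra hv
    exact hyT' ⟨v, h1, hv, h2⟩
  have htake : ∀ m, m ≤ k →
      (true :: (List.replicate (2*k) false ++ [true])).take m =
      (true :: List.replicate k false).take m := by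
    intro m hm
    rcases m with _ | m0
    · simp
    · simp only [List.take_succ_cons]
      rw [List.take_append_of_le_length (by simp; omega),
        List.take_replicate, List.take_replicate]
      congr 2
      omega
  have hwγ : (true :: List.replicate k false) ∈ gammaK k Z := by
    simp only [gammaK, Set.mem_union, Set.mem_inter_iff, Set.mem_diff, Set.mem_setOf_eq]
    refine Or.inr ⟨⟨⟨uI, huI, ?_⟩, ⟨uF, huF, ?_⟩⟩, ?_⟩
    · have he : uI = (true :: List.replicate k false).take (k-1) := by
        rw [List.prefix_iff_eq_take.mp huIp, (hI huI : uI.length = k - 1),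
          htake (k-1) (by omega)]
      rw [he]
      exact List.take_prefix _ _
    · have he : uF = List.replicate (k-1) false := by
        have h2 := infix_replicate uF (2*k) false huFs.isInfix
        rwa [(hF huF : uF.length = k - 1)] at h2
      refine ⟨true :: List.replicate (k - (k-1)) false, ?_⟩
      rw [he, List.cons_append, ← List.replicate_add]
      congr 2
      omega
    · rintro ⟨v, hvl, hvT, s, t, hst⟩
      have hlens : s.length + k + t.length = k + 1 := by
        have := congrArg List.length hst
        simp [hvl] at this
        omega
      rcases Nat.eq_zero_or_pos s.length with hs0 | hs1
      · -- v is a prefix of w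
        have hs : s = [] := List.eq_nil_of_length_eq_zero hs0
        subst hs
        simp only [List.nil_append] at hst
        have hvp : v <+: (true :: List.replicate k false) := ⟨t, hst⟩
        have hve : v = true :: List.replicate (k-1) false := by
          rw [List.prefix_iff_eq_take.mp hvp, hvl]
          rcases k with _ | k0
          · omega
          · rw [List.take_succ_cons, List.take_replicate]
            congr 2
            omega
        refine absurd (hTx v hvl ?_) hvT
        refine ⟨[], List.replicate (k+1) false ++ [true], ?_⟩
        rw [hve]
        simp only [List.nil_append, List.cons_append]
        rw [← List.append_assoc, ← List.replicate_add]
        congr 3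
        omega
      · -- v is the suffix replicate k false
        have ht : t = [] := List.eq_nil_of_length_eq_zero (by omega)
        subst ht
        rcases s with - | ⟨s0, s'⟩
        · simp at hs1
        · have hs' : s' = [] := List.eq_nil_of_length_eq_zero (by
            simp only [List.length_cons] at hlens; omega)
          subst hs'
          simp only [List.cons_append, List.nil_append, List.append_nil] at hst
          obtain ⟨-, hve⟩ := List.cons_eq_cons.mp hst
          refine absurd (hTy v hvl ?_) hvT
          refine ⟨[], List.replicate k false, ?_⟩
          rw [hve]
          simp only [List.nil_append]
          rw [← List.replicate_add]
          congr 1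
          omega
  rw [hγ] at hwγ
  rcases hwγ with ⟨n, -, he⟩ | ⟨n, he⟩
  · have hmem : true ∈ (true :: List.replicate k false) := List.mem_cons_self
    rw [he] at hmem
    simpa using List.eq_of_mem_replicate hmem
  · obtain ⟨-, he2⟩ := List.cons_eq_cons.mp he
    have hmem : true ∈ List.replicate k false := by
      rw [he2]; simp
    simpa using List.eq_of_mem_replicate hmem


/-- `k`-TSS languages are not closed under union:
`{a^n : n ≥ 2} ∪ {b a^n b : n ≥ 0}`, the union of two 3-TSS languages,
is not `k`-testable for any `k > 0`. -/
theorem stmt13 :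
    let a : Bool := false
    let b : Bool := true
    let Z : KTV Bool := ⟨{[a,a]}, {[a,a]}, {[a,a,a]}, {[a,a]}⟩
    let Z' : KTV Bool := ⟨{[b,a],[b,b]}, {[a,b],[b,b]},
      {[b,a,a],[b,a,b],[a,a,a],[a,a,b]}, {[b,b]}⟩
    let L : Set (List Bool) :=
      {x | ∃ n, 2 ≤ n ∧ x = List.replicate n a} ∪
      {x | ∃ n, x = b :: (List.replicate n a ++ [b])}
    IsKTV 3 Z ∧ IsKTV 3 Z' ∧ gammaK 3 Z ∪ gammaK 3 Z' = L ∧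
      ∀ k, 0 < k → ¬ IsKTSS k L := by
  exact ⟨lem1, lem2, lem3, lem4⟩
end

section
/- The symmetric difference of k-test vectors is associative: for all k-test vectors Z, Z', Z'' (over alphabet Σ, for some k > 0), Z △ (Z' △ Z'') = (Z △ Z') △ Z''. -/
open Set
open scoped symmDiff

variable {A : Type*}

/-- `△` on `k`-test vectors is associative. -/
theorem stmt16 {A : Type*} [Fintype A] (k : ℕ) (hk : 0 < k)
    (Z Z' Z'' : KTV A) (hZ : IsKTV k Z) (hZ' : IsKTV k Z') (hZ'' : IsKTV k Z'') :
    ktvSymmDiff Z (ktvSymmDiff Z' Z'') = ktvSymmDiff (ktvSymmDiff Z Z') Z'' := by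
  simp only [ktvSymmDiff, KTV.mk.injEq]
  refine ⟨(symmDiff_assoc _ _ _).symm, (symmDiff_assoc _ _ _).symm,
    (symmDiff_assoc _ _ _).symm, ?_⟩
  simp only [Set.inter_symmDiff_distrib_left, Set.inter_symmDiff_distrib_right]
  simp only [symmDiff_assoc, symmDiff_comm, symmDiff_left_comm]
end

section
/- The distance function d(Z, Z') = |Z △ Z'| on the set 𝒯_k of k-test vectors is a metric: for all Z, Z', Z'' ∈ 𝒯_k, (1) d(Z,Z') ≥ 0; (2) d(Z,Z') = 0 if and only if Z = Z'; (3) d(Z,Z') = d(Z',Z); and (4) d(Z,Z'') ≤ d(Z,Z') + d(Z',Z''). -/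
open Set
open scoped symmDiff

variable {A : Type*}

section Aux18
variable {A : Type*} [Fintype A]

private lemma finSymm {X Y : Set (List A)} (hX : X.Finite) (hY : Y.Finite) :
    (X ∆ Y).Finite := (hX.diff : (X \ Y).Finite).union (hY.diff : (Y \ X).Finite)

private lemma aux_tri {X Y W : Set (List A)} (hX : X.Finite) (hY : Y.Finite) (hW : W.Finite) :
    (X ∆ W).ncard ≤ (X ∆ Y).ncard + (Y ∆ W).ncard :=
  le_trans (Set.ncard_le_ncard (symmDiff_triangle X Y W)
    ((finSymm hX hY).union (finSymm hY hW))) (Set.ncard_union_le _ _)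

private lemma aux_C {C C' X Y S : Set (List A)} (hX : X ∩ S = ∅) (hY : Y ∩ S = ∅) :
    (C ∆ C' ∆ X ∆ Y) ∩ S = (C ∩ S) ∆ (C' ∩ S) := by
  have h1 : ∀ U V : Set (List A), (U ∆ V) ∩ S = (U ∩ S) ∆ (V ∩ S) := fun U V => by
    ext w; simp [Set.mem_symmDiff, Set.mem_inter_iff]; tauto
  rw [h1, h1, h1, hX, hY]
  simp

end Aux18

/-- `d(Z,Z') = |Z △ Z'|` is a metric on `𝒯_k`. -/
theorem stmt18 {A : Type*} [Fintype A] (k : ℕ) (hk : 0 < k)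
    (Z Z' Z'' : KTV A) (hZ : IsKTV k Z) (hZ' : IsKTV k Z') (hZ'' : IsKTV k Z'') :
    0 ≤ ktvCard k (ktvSymmDiff Z Z') ∧
    (ktvCard k (ktvSymmDiff Z Z') = 0 ↔ Z = Z') ∧
    ktvCard k (ktvSymmDiff Z Z') = ktvCard k (ktvSymmDiff Z' Z) ∧
    ktvCard k (ktvSymmDiff Z Z'') ≤
      ktvCard k (ktvSymmDiff Z Z') + ktvCard k (ktvSymmDiff Z' Z'') := by
  obtain ⟨hI, hF, hT, hC, hIF⟩ := hZ
  obtain ⟨hI', hF', hT', hC', hIF'⟩ := hZ'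
  obtain ⟨hI'', hF'', hT'', hC'', hIF''⟩ := hZ''
  set S : Set (List A) := {w : List A | w.length < k - 1} with hS
  have hSfin : S.Finite := List.finite_length_lt A (k-1)
  have hdisj : ∀ X Y : Set (List A), X ⊆ {w : List A | w.length = k - 1} →
      (X ∩ Y) ∩ S = ∅ := by
    intro X Y hX
    ext w; simp only [Set.mem_inter_iff, Set.mem_empty_iff_false, iff_false, not_and]
    rintro ⟨hw, -⟩ hwS
    have h1 := hX hw
    simp only [hS, Set.mem_setOf_eq] at h1 hwS
    omega
  have key : ∀ W W' : KTV A, IsKTV k W → IsKTV k W' →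
      ktvCard k (ktvSymmDiff W W') = (W.I ∆ W'.I).ncard + (W.F ∆ W'.F).ncard +
        (W.T ∆ W'.T).ncard + ((W.C ∩ S) ∆ (W'.C ∩ S)).ncard := by
    intro W W' hW hW'
    unfold ktvCard ktvSymmDiff
    simp only
    rw [aux_C (hdisj _ _ hW'.1) (hdisj _ _ hW.1)]
  have finI := List.finite_length_eq A (k-1)
  have finT := List.finite_length_eq A k
  have fI := finI.subset hI; have fI' := finI.subset hI'; have fI'' := finI.subset hI''
  have fF := finI.subset hF; have fF' := finI.subset hF'; have fF'' := finI.subset hF''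
  have fT := finT.subset hT; have fT' := finT.subset hT'; have fT'' := finT.subset hT''
  have fC : ∀ C : Set (List A), (C ∩ S).Finite := fun C => hSfin.subset (Set.inter_subset_right)
  refine ⟨Nat.zero_le _, ?_, ?_, ?_⟩
  · rw [key Z Z' ⟨hI, hF, hT, hC, hIF⟩ ⟨hI', hF', hT', hC', hIF'⟩]
    constructor
    · intro h
      simp only [Nat.add_eq_zero] at h
      obtain ⟨⟨⟨h1, h2⟩, h3⟩, h4⟩ := h
      have eI : Z.I = Z'.I := by
        exact symmDiff_eq_bot.mp ((Set.ncard_eq_zero (finSymm fI fI')).mp h1)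
      have eF : Z.F = Z'.F := by
        exact symmDiff_eq_bot.mp ((Set.ncard_eq_zero (finSymm fF fF')).mp h2)
      have eT : Z.T = Z'.T := by
        exact symmDiff_eq_bot.mp ((Set.ncard_eq_zero (finSymm fT fT')).mp h3)
      have eCS : Z.C ∩ S = Z'.C ∩ S := by
        exact symmDiff_eq_bot.mp ((Set.ncard_eq_zero (finSymm (fC _) (fC _))).mp h4)
      have eC : Z.C = Z'.C := by
        have hsplit : ∀ C : Set (List A), C ⊆ {w : List A | w.length < k} →
            C = (C ∩ S) ∪ (C ∩ {w : List A | w.length = k - 1}) := by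
          intro C hCk
          ext w
          simp only [Set.mem_union, Set.mem_inter_iff, Set.mem_setOf_eq, hS]
          constructor
          · intro hw
            have := hCk hw
            simp only [Set.mem_setOf_eq] at this
            rcases Nat.lt_or_ge w.length (k-1) with h | h
            · exact Or.inl ⟨hw, h⟩
            · exact Or.inr ⟨hw, by omega⟩
          · rintro (⟨hw, -⟩ | ⟨hw, -⟩) <;> exact hw
        rw [hsplit Z.C hC, hsplit Z'.C hC', eCS, ← hIF, ← hIF', eI, eF]
      rcases Z with ⟨a,b,c,d⟩; rcases Z' with ⟨a',b',c',d'⟩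
      simp_all
    · rintro rfl
      simp [symmDiff_self, Set.ncard_empty]
  · rw [key Z Z' ⟨hI, hF, hT, hC, hIF⟩ ⟨hI', hF', hT', hC', hIF'⟩,
       key Z' Z ⟨hI', hF', hT', hC', hIF'⟩ ⟨hI, hF, hT, hC, hIF⟩,
       symmDiff_comm, symmDiff_comm Z'.F, symmDiff_comm Z'.T, symmDiff_comm (Z'.C ∩ S)]
  · rw [key Z Z'' ⟨hI, hF, hT, hC, hIF⟩ ⟨hI'', hF'', hT'', hC'', hIF''⟩,
       key Z Z' ⟨hI, hF, hT, hC, hIF⟩ ⟨hI', hF', hT', hC', hIF'⟩,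
       key Z' Z'' ⟨hI', hF', hT', hC', hIF'⟩ ⟨hI'', hF'', hT'', hC'', hIF''⟩]
    have t1 := aux_tri fI fI' fI''
    have t2 := aux_tri fF fF' fF''
    have t3 := aux_tri fT fT' fT''
    have t4 := aux_tri (fC Z.C) (fC Z'.C) (fC Z''.C)
    omega
end
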